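/- Let X be a discrete metric space of bounded geometry and T ∈ B(ℓ²(X)) a quasi-local operator with ‖T‖ ≤ 1. Then for every ε ∈ (0,1) there exist δ > 0 and R > 0 such that for every h ∈ ℓ∞(X) with ‖h‖∞ = 1 and |h(x) − h(y)| < δ whenever d(x,y) ≤ R, one has ‖[T,h]‖ < ε. -/

import Mathlib

open scoped ENNReal
open Metric Set Function

noncomputable section

variable {X : Type*}

/-- The pointwise product of an `ℓ∞` function and an `ℓ²` function is again `ℓ²`. -/
theorem memℓp_two_mul (f : lp (fun _ : X => ℂ) ∞) (ξ : lp (fun _ : X => ℂ) 2) :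
    Memℓp (fun x => f x * ξ x) 2 := by
  apply memℓp_gen
  have h2 : (2 : ℝ≥0∞).toReal = 2 := by norm_num
  rw [h2]
  have hsum : Summable fun x => ‖f‖ ^ (2:ℝ) * ‖ξ x‖ ^ (2:ℝ) :=
    (by simpa [h2] using (lp.memℓp ξ).summable (by rw [h2]; norm_num) :
      Summable fun x => ‖ξ x‖ ^ (2:ℝ)).mul_left _
  refine Summable.of_nonneg_of_le (fun x => by positivity) (fun x => ?_) hsum
  have h1 : ‖f x * ξ x‖ ≤ ‖f‖ * ‖ξ x‖ := by
    rw [norm_mul]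
    exact mul_le_mul_of_nonneg_right (lp.norm_apply_le_norm (by norm_num) f x) (norm_nonneg _)
  calc ‖f x * ξ x‖ ^ (2:ℝ) ≤ (‖f‖ * ‖ξ x‖) ^ (2:ℝ) := by
        gcongr
    _ = ‖f‖ ^ (2:ℝ) * ‖ξ x‖ ^ (2:ℝ) := by
        rw [Real.mul_rpow (norm_nonneg _) (norm_nonneg _)]

/-- Multiplication by a bounded function `f ∈ ℓ∞(X)`, as a bounded operator on `ℓ²(X)`. -/
def mulOp (f : lp (fun _ : X => ℂ) ∞) :
    lp (fun _ : X => ℂ) 2 →L[ℂ] lp (fun _ : X => ℂ) 2 :=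
  LinearMap.mkContinuous
    { toFun := fun ξ => ⟨fun x => f x * ξ x, memℓp_two_mul f ξ⟩
      map_add' := fun ξ η => Subtype.ext <| funext fun x => by
        simp only [lp.coeFn_add, Pi.add_apply, mul_add]
      map_smul' := fun c ξ => Subtype.ext <| funext fun x => by
        simp only [lp.coeFn_smul, Pi.smul_apply, smul_eq_mul, RingHom.id_apply]
        ring }
    ‖f‖ (by
      intro ξ
      refine lp.norm_le_of_forall_sum_le (by norm_num) (by positivity) fun s => ?_
      have hb : ∀ x ∈ s, ‖f x * ξ x‖ ^ ((2:ℝ≥0∞).toReal)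
          ≤ ‖f‖ ^ ((2:ℝ≥0∞).toReal) * ‖ξ x‖ ^ ((2:ℝ≥0∞).toReal) := by
        intro x _
        rw [← Real.mul_rpow (norm_nonneg _) (norm_nonneg _)]
        refine Real.rpow_le_rpow (norm_nonneg _) ?_ (by norm_num)
        rw [norm_mul]
        exact mul_le_mul_of_nonneg_right (lp.norm_apply_le_norm (by norm_num) f x) (norm_nonneg _)
      calc ∑ x ∈ s, ‖f x * ξ x‖ ^ ((2:ℝ≥0∞).toReal)
          ≤ ∑ x ∈ s, ‖f‖ ^ ((2:ℝ≥0∞).toReal) * ‖ξ x‖ ^ ((2:ℝ≥0∞).toReal) :=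
            Finset.sum_le_sum hb
        _ = ‖f‖ ^ ((2:ℝ≥0∞).toReal) * ∑ x ∈ s, ‖ξ x‖ ^ ((2:ℝ≥0∞).toReal) := by
            rw [Finset.mul_sum]
        _ ≤ ‖f‖ ^ ((2:ℝ≥0∞).toReal) * ‖ξ‖ ^ ((2:ℝ≥0∞).toReal) :=
            mul_le_mul_of_nonneg_left (lp.sum_rpow_le_norm_rpow (by norm_num) ξ s)
              (Real.rpow_nonneg (norm_nonneg _) _)
        _ = (‖f‖ * ‖ξ‖) ^ ((2:ℝ≥0∞).toReal) :=
            (Real.mul_rpow (norm_nonneg _) (norm_nonneg _)).symm)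

/-- `d(supp f, supp g) > R`: every point of the support of `f` is at distance `> R` from
every point of the support of `g`. -/
def SepGT [MetricSpace X] (R : ℝ) (f g : lp (fun _ : X => ℂ) ∞) : Prop :=
  ∀ x ∈ Function.support (⇑f : X → ℂ), ∀ y ∈ Function.support (⇑g : X → ℂ), R < dist x y

/-- A bounded operator `T` on `ℓ²(X)` is *quasi-local* if for every `ε > 0` there is `R > 0`
such that `‖f T g‖ ≤ ε ‖f‖∞ ‖g‖∞` whenever the supports of `f, g ∈ ℓ∞(X)` are `R`-separated. -/
def QuasiLocal [MetricSpace X]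
    (T : lp (fun _ : X => ℂ) 2 →L[ℂ] lp (fun _ : X => ℂ) 2) : Prop :=
  ∀ ε > (0 : ℝ), ∃ R > (0 : ℝ), ∀ f g : lp (fun _ : X => ℂ) ∞, SepGT R f g →
    ‖mulOp f ∘L T ∘L mulOp g‖ ≤ ε * ‖f‖ * ‖g‖
section Helpers

theorem memℓp_infty_of_bounded {u : X → ℂ} {C : ℝ} (hb : ∀ x, ‖u x‖ ≤ C) :
    Memℓp u ∞ :=
  memℓp_infty ⟨C, by rintro y ⟨x, rfl⟩; exact hb x⟩

/-- Package a bounded function as an element of `ℓ∞`. -/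
def mkInf (u : X → ℂ) (C : ℝ) (hb : ∀ x, ‖u x‖ ≤ C) : lp (fun _ : X => ℂ) ∞ :=
  ⟨u, memℓp_infty_of_bounded hb⟩

@[simp] theorem mkInf_apply (u : X → ℂ) (C : ℝ) (hb : ∀ x, ‖u x‖ ≤ C) (x : X) :
    (mkInf u C hb) x = u x := rfl

theorem norm_mkInf_le (u : X → ℂ) (C : ℝ) (hb : ∀ x, ‖u x‖ ≤ C) (hC : 0 ≤ C) :
    ‖mkInf u C hb‖ ≤ C :=
  lp.norm_le_of_forall_le hC hb

@[simp] theorem mulOp_apply (f : lp (fun _ : X => ℂ) ∞) (ξ : lp (fun _ : X => ℂ) 2) (x : X) :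
    (mulOp f ξ) x = f x * ξ x := rfl

theorem norm_mulOp_le (f : lp (fun _ : X => ℂ) ∞) : ‖mulOp f‖ ≤ ‖f‖ :=
  LinearMap.mkContinuous_norm_le _ (norm_nonneg f) _

theorem norm_mulOp_apply_le (f : lp (fun _ : X => ℂ) ∞) (ξ : lp (fun _ : X => ℂ) 2)
    (hf : ‖f‖ ≤ 1) : ‖mulOp f ξ‖ ≤ ‖ξ‖ := by
  calc ‖mulOp f ξ‖ ≤ ‖mulOp f‖ * ‖ξ‖ := (mulOp f).le_opNorm ξ
    _ ≤ 1 * ‖ξ‖ := by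
        have := (norm_mulOp_le f).trans hf
        exact mul_le_mul_of_nonneg_right this (norm_nonneg _)
    _ = ‖ξ‖ := one_mul _

/-- `mulOp` as a linear map in the multiplier. -/
def mulOpL : lp (fun _ : X => ℂ) ∞ →ₗ[ℂ]
    (lp (fun _ : X => ℂ) 2 →L[ℂ] lp (fun _ : X => ℂ) 2) where
  toFun := mulOp
  map_add' f g := by
    ext ξ x
    simp [lp.coeFn_add, Pi.add_apply, add_mul]
  map_smul' c f := by
    ext ξ x
    simp [lp.coeFn_smul, Pi.smul_apply, smul_eq_mul, mul_assoc]

@[simp] theorem mulOpL_apply (f : lp (fun _ : X => ℂ) ∞) : mulOpL f = mulOp f := rfl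

/-- Indicator function of a set as an element of `ℓ∞`. -/
def chiInd (s : Set X) : lp (fun _ : X => ℂ) ∞ :=
  mkInf (s.indicator fun _ => (1 : ℂ)) 1 (fun x => by
    by_cases hx : x ∈ s <;> simp [Set.indicator_apply, hx])

theorem chiInd_apply_mem {s : Set X} {x : X} (h : x ∈ s) : chiInd s x = 1 := by
  change s.indicator (fun _ => (1:ℂ)) x = 1
  exact Set.indicator_of_mem h _

theorem chiInd_apply_not_mem {s : Set X} {x : X} (h : x ∉ s) : chiInd s x = 0 := by
  change s.indicator (fun _ => (1:ℂ)) x = 0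
  exact Set.indicator_of_notMem h _

theorem norm_chiInd_le (s : Set X) : ‖chiInd s‖ ≤ 1 :=
  norm_mkInf_le _ _ _ zero_le_one

theorem support_chiInd (s : Set X) :
    Function.support (⇑(chiInd s) : X → ℂ) ⊆ s := by
  intro x hx
  by_contra hxs
  exact hx (chiInd_apply_not_mem hxs)

theorem mulOp_chiInd_univ : mulOp (chiInd (Set.univ : Set X)) = 1 := by
  ext ξ x
  rw [ContinuousLinearMap.one_apply, mulOp_apply, chiInd_apply_mem (Set.mem_univ x), one_mul]

end Helpers
section Orthogonality

theorem norm_sq_sum_disjoint {ι : Type*} (s : Finset ι) (w : ι → lp (fun _ : X => ℂ) 2)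
    (hd : ∀ i ∈ s, ∀ j ∈ s, i ≠ j → ∀ x, w i x = 0 ∨ w j x = 0) :
    ‖∑ k ∈ s, w k‖ ^ 2 = ∑ k ∈ s, ‖w k‖ ^ 2 := by
  have key : ∀ i ∈ s, ∀ j ∈ s, i ≠ j → (inner ℂ (w i) (w j)) = 0 := by
    intro i hi j hj hij
    rw [lp.inner_eq_tsum]
    have hz : ∀ x : X, (starRingEnd ℂ) (w i x) * (w j x) = 0 := by
      intro x
      rcases hd i hi j hj hij x with h | h
      · rw [h]; simp
      · rw [h]; simp
    simpa [RCLike.inner_apply, mul_comm] using tsum_congr hz |>.trans tsum_zero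
  have hinner : (inner ℂ (∑ k ∈ s, w k) (∑ k ∈ s, w k))
      = ∑ k ∈ s, (inner ℂ (w k) (w k)) := by
    rw [sum_inner]
    refine Finset.sum_congr rfl fun i hi => ?_
    rw [inner_sum]
    exact Finset.sum_eq_single_of_mem i hi (fun j hj hji => key i hi j hj (fun e => hji e.symm))
  have h1 : ‖∑ k ∈ s, w k‖ ^ 2
      = RCLike.re (inner ℂ (∑ k ∈ s, w k) (∑ k ∈ s, w k)) :=
    (inner_self_eq_norm_sq _).symm
  rw [h1, hinner, map_sum]
  exact Finset.sum_congr rfl fun i _ => inner_self_eq_norm_sq _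

theorem row_est {ι : Type*} (s : Finset ι) (B : ι → Set X)
    (hdisj : ∀ i ∈ s, ∀ j ∈ s, i ≠ j → ∀ x, x ∈ B i → x ∉ B j)
    (C : ι → (lp (fun _ : X => ℂ) 2 →L[ℂ] lp (fun _ : X => ℂ) 2))
    (ξ : lp (fun _ : X => ℂ) 2) :
    ‖∑ k ∈ s, mulOp (chiInd (B k)) (C k ξ)‖ ^ 2 ≤ ∑ k ∈ s, ‖C k ξ‖ ^ 2 := by
  have hzero : ∀ k, ∀ x, x ∉ B k → mulOp (chiInd (B k)) (C k ξ) x = 0 := by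
    intro k x hx
    rw [mulOp_apply, chiInd_apply_not_mem hx, zero_mul]
  rw [norm_sq_sum_disjoint s _ (fun i hi j hj hij x => by
    by_cases hx : x ∈ B i
    · exact Or.inr (hzero j x (hdisj i hi j hj hij x hx))
    · exact Or.inl (hzero i x hx))]
  refine Finset.sum_le_sum fun k _ => ?_
  have := norm_mulOp_apply_le (chiInd (B k)) (C k ξ) (norm_chiInd_le _)
  exact pow_le_pow_left₀ (norm_nonneg _) this 2

theorem col_est {ι : Type*} (s : Finset ι) (B : ι → Set X)
    (hdisj : ∀ i ∈ s, ∀ j ∈ s, i ≠ j → ∀ x, x ∈ B i → x ∉ B j)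
    (ξ : lp (fun _ : X => ℂ) 2) :
    ∑ k ∈ s, ‖mulOp (chiInd (B k)) ξ‖ ^ 2 ≤ ‖ξ‖ ^ 2 := by
  classical
  have hzero : ∀ k, ∀ x, x ∉ B k → mulOp (chiInd (B k)) ξ x = 0 := by
    intro k x hx
    rw [mulOp_apply, chiInd_apply_not_mem hx, zero_mul]
  rw [← norm_sq_sum_disjoint s _ (fun i hi j hj hij x => by
    by_cases hx : x ∈ B i
    · exact Or.inr (hzero j x (hdisj i hi j hj hij x hx))
    · exact Or.inl (hzero i x hx))]
  have hsum : ∑ k ∈ s, mulOp (chiInd (B k)) ξ = mulOp (∑ k ∈ s, chiInd (B k)) ξ := by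
    rw [show mulOp (∑ k ∈ s, chiInd (B k)) = mulOpL (∑ k ∈ s, chiInd (B k)) from rfl,
      map_sum]
    simp only [mulOpL_apply, ContinuousLinearMap.sum_apply]
  rw [hsum]
  have hnorm1 : ‖∑ k ∈ s, chiInd (B k)‖ ≤ 1 := by
    refine lp.norm_le_of_forall_le zero_le_one fun x => ?_
    rw [lp.coeFn_sum]
    by_cases hx : ∃ i ∈ s, x ∈ B i
    · obtain ⟨i, hi, hxi⟩ := hx
      rw [Finset.sum_apply, Finset.sum_eq_single_of_mem i hi (fun j hj hji => by
        exact chiInd_apply_not_mem (hdisj i hi j hj (fun e => hji e.symm) x hxi)),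
        chiInd_apply_mem hxi]
      norm_num
    · push_neg at hx
      rw [Finset.sum_apply, Finset.sum_eq_zero (fun j hj => chiInd_apply_not_mem (hx j hj))]
      norm_num
  have := norm_mulOp_apply_le _ ξ hnorm1
  exact pow_le_pow_left₀ (norm_nonneg _) this 2

end Orthogonality
section Counting

open Finset in
theorem count_bounds (N : ℕ) (hN : 0 < N) (t : ℝ) (ht0 : 0 ≤ t) (ht2 : t ≤ 2) [DecidablePred (fun k : ℕ => (k:ℝ)/N < t)] :
    (N:ℝ) * t - 1 ≤ (((Finset.Icc 1 (2*N)).filter (fun k : ℕ => (k:ℝ)/N < t)).card : ℝ) ∧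
    ((((Finset.Icc 1 (2*N)).filter (fun k : ℕ => (k:ℝ)/N < t)).card : ℝ) ≤ (N:ℝ) * t) := by
  have hNR : (0:ℝ) < N := by exact_mod_cast hN
  have hiff : ∀ k : ℕ, ((k:ℝ)/N < t ↔ (k:ℝ) < N * t) := by
    intro k
    rw [div_lt_iff₀ hNR, mul_comm]
  constructor
  · -- lower bound
    by_cases hc : ⌈(N:ℝ) * t⌉₊ = 0
    · have h1 : (N:ℝ) * t ≤ 0 := by
        have := Nat.le_ceil ((N:ℝ) * t)
        rw [hc] at this; exact_mod_cast this
      have : (0:ℝ) ≤ (((Finset.Icc 1 (2*N)).filter (fun k : ℕ => (k:ℝ)/N < t)).card : ℝ) := by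
        positivity
      linarith
    · have hsub : Finset.Icc 1 (⌈(N:ℝ) * t⌉₊ - 1) ⊆
          (Finset.Icc 1 (2*N)).filter (fun k : ℕ => (k:ℝ)/N < t) := by
        intro k hk
        rw [Finset.mem_Icc] at hk
        have hceil_le : ⌈(N:ℝ) * t⌉₊ ≤ 2*N := by
          rw [Nat.ceil_le]
          push_cast
          nlinarith
        rw [Finset.mem_filter, Finset.mem_Icc, hiff]
        refine ⟨⟨hk.1, by omega⟩, ?_⟩
        have : k < ⌈(N:ℝ) * t⌉₊ := by omega
        exact Nat.lt_ceil.mp this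
      have hcard := Finset.card_le_card hsub
      rw [Nat.card_Icc] at hcard
      have h2 : (N:ℝ) * t ≤ (⌈(N:ℝ) * t⌉₊ : ℝ) := Nat.le_ceil _
      have h3 : (⌈(N:ℝ) * t⌉₊ - 1 + 1 - 1 : ℕ) = ⌈(N:ℝ) * t⌉₊ - 1 := by omega
      rw [h3] at hcard
      have h4 : ((⌈(N:ℝ) * t⌉₊ - 1 : ℕ) : ℝ) = (⌈(N:ℝ) * t⌉₊ : ℝ) - 1 := by
        have : 1 ≤ ⌈(N:ℝ) * t⌉₊ := by omega
        push_cast [this]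
        ring
      have h5 : ((⌈(N:ℝ) * t⌉₊ - 1 : ℕ) : ℝ) ≤ _ := Nat.cast_le.mpr hcard
      linarith [h5]
  · -- upper bound
    have hsub : (Finset.Icc 1 (2*N)).filter (fun k : ℕ => (k:ℝ)/N < t) ⊆
        Finset.Icc 1 ⌊(N:ℝ) * t⌋₊ := by
      intro k hk
      rw [Finset.mem_filter, Finset.mem_Icc, hiff] at hk
      rw [Finset.mem_Icc]
      exact ⟨hk.1.1, Nat.le_floor hk.2.le⟩
    have hcard := Finset.card_le_card hsub
    rw [Nat.card_Icc] at hcard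
    have h1 : (⌊(N:ℝ) * t⌋₊ : ℝ) ≤ (N:ℝ) * t := Nat.floor_le (by positivity)
    have h2 : (((Finset.Icc 1 (2*N)).filter (fun k : ℕ => (k:ℝ)/N < t)).card : ℝ)
        ≤ (⌊(N:ℝ) * t⌋₊ : ℝ) := by
      have : ((Finset.Icc 1 (2*N)).filter (fun k : ℕ => (k:ℝ)/N < t)).card ≤ ⌊(N:ℝ) * t⌋₊ := by
        omega
      exact_mod_cast this
    linarith

end Counting
section MainReal

set_option maxHeartbeats 2000000 in
theorem main_real [MetricSpace X]
    (T : lp (fun _ : X => ℂ) 2 →L[ℂ] lp (fun _ : X => ℂ) 2) (hT1 : ‖T‖ ≤ 1)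
    {ε' R : ℝ} (hε' : 0 < ε')
    (hQL : ∀ f g : lp (fun _ : X => ℂ) ∞, SepGT R f g →
      ‖mulOp f ∘L T ∘L mulOp g‖ ≤ ε' * ‖f‖ * ‖g‖)
    {N : ℕ} (hN : 0 < N)
    {v : X → ℝ} (hv0 : ∀ x, 0 ≤ v x) (hv2 : ∀ x, v x ≤ 2)
    (hosc : ∀ x y : X, 1 / N ≤ |v x - v y| → R < dist x y)
    (vt : lp (fun _ : X => ℂ) ∞) (hvt : ∀ x, vt x = ((v x : ℝ) : ℂ)) :
    ‖T ∘L mulOp vt - mulOp vt ∘L T‖ ≤ 4 * ε' + 2 * Real.sqrt (2 / N) + 2 / N := by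
  classical
  have hNR : (0:ℝ) < N := by exact_mod_cast hN
  have hNC : ((N:ℂ)) ≠ 0 := by exact_mod_cast hN.ne'
  set M := 2 * N with hM
  -- the sets
  set Ek : ℕ → Set X := fun k => {x | (k:ℝ)/N < v x} with hEk
  set Fk : ℕ → Set X := fun k => {x | v x ≤ ((k:ℝ)-1)/N} with hFk
  set Bk : ℕ → Set X := fun k => {x | ((k:ℝ)-1)/N < v x ∧ v x ≤ (k:ℝ)/N} with hBk
  -- the counting function
  set cnt : X → ℕ := fun x => ((Finset.Icc 1 M).filter (fun k : ℕ => (k:ℝ)/N < v x)).card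
    with hcnt
  have hcnt_bd : ∀ x, (N:ℝ) * v x - 1 ≤ (cnt x : ℝ) ∧ ((cnt x : ℝ) ≤ (N:ℝ) * v x) := by
    intro x
    exact count_bounds N hN (v x) (hv0 x) (hv2 x)
  -- the remainder
  have hr_bd : ∀ x, ‖(((v x - cnt x / N : ℝ)) : ℂ)‖ ≤ 1/N := by
    intro x
    rw [Complex.norm_real, Real.norm_eq_abs, abs_le]
    obtain ⟨h1, h2⟩ := hcnt_bd x
    have hd1 : (cnt x : ℝ) / N ≤ v x := by
      rw [div_le_iff₀ hNR]; nlinarith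
    have hd2 : v x - 1/N ≤ (cnt x : ℝ) / N := by
      rw [le_div_iff₀ hNR]
      have hexp : (v x - 1/N) * N = N * v x - 1 := by field_simp
      linarith
    constructor <;> [linarith; linarith]
  set rt : lp (fun _ : X => ℂ) ∞ := mkInf (fun x => ((v x - cnt x / N : ℝ) : ℂ)) (1/N) hr_bd
    with hrt
  -- ℓ∞ identity
  have hvt2 : vt = (N:ℂ)⁻¹ • (∑ k ∈ Finset.Icc 1 M, chiInd (Ek k)) + rt := by
    apply Subtype.ext
    funext x
    have hsum : (∑ k ∈ Finset.Icc 1 M, chiInd (Ek k)) x = ((cnt x : ℕ) : ℂ) := by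
      rw [lp.coeFn_sum, Finset.sum_apply]
      rw [Finset.sum_congr rfl (fun k _ => show chiInd (Ek k) x = if (k:ℝ)/N < v x then 1 else 0
        by split_ifs with hk
           · exact chiInd_apply_mem hk
           · exact chiInd_apply_not_mem hk)]
      rw [Finset.sum_boole]
    calc vt x = ((v x : ℝ) : ℂ) := hvt x
      _ = (N:ℂ)⁻¹ * ((cnt x : ℕ) : ℂ) + ((v x - cnt x / N : ℝ) : ℂ) := by
          push_cast
          field_simp
          ring
      _ = ((N:ℂ)⁻¹ • (∑ k ∈ Finset.Icc 1 M, chiInd (Ek k)) + rt) x := by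
          rw [lp.coeFn_add, Pi.add_apply, lp.coeFn_smul, Pi.smul_apply, hsum, smul_eq_mul]
          rfl
  -- operator identity
  set P : ℕ → (lp (fun _ : X => ℂ) 2 →L[ℂ] lp (fun _ : X => ℂ) 2) :=
    fun k => mulOp (chiInd (Ek k)) with hP
  set QF : ℕ → (lp (fun _ : X => ℂ) 2 →L[ℂ] lp (fun _ : X => ℂ) 2) :=
    fun k => mulOp (chiInd (Fk k)) with hQF
  set QB : ℕ → (lp (fun _ : X => ℂ) 2 →L[ℂ] lp (fun _ : X => ℂ) 2) :=
    fun k => mulOp (chiInd (Bk k)) with hQB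
  have hOp : mulOp vt = (N:ℂ)⁻¹ • (∑ k ∈ Finset.Icc 1 M, P k) + mulOp rt := by
    rw [show mulOp vt = mulOpL vt from rfl, hvt2, map_add, map_smul, map_sum]
    simp only [mulOpL_apply]
    rfl
  -- partition of unity
  have hmemE : ∀ (k : ℕ) (x : X), x ∈ Ek k ↔ (k:ℝ)/N < v x := fun k x => Iff.rfl
  have hmemF : ∀ (k : ℕ) (x : X), x ∈ Fk k ↔ v x ≤ ((k:ℝ)-1)/N := fun k x => Iff.rfl
  have hmemB : ∀ (k : ℕ) (x : X), x ∈ Bk k ↔ (((k:ℝ)-1)/N < v x ∧ v x ≤ (k:ℝ)/N) :=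
    fun k x => Iff.rfl
  have hone : ∀ k : ℕ, QF k + QB k + P k = 1 := by
    intro k
    have hk1 : ((k:ℝ)-1)/N ≤ (k:ℝ)/N := by
      rw [div_le_div_iff₀ hNR hNR]; nlinarith
    have hchi : chiInd (Fk k) + chiInd (Bk k) + chiInd (Ek k)
        = chiInd (Set.univ : Set X) := by
      apply Subtype.ext
      funext x
      rw [lp.coeFn_add, Pi.add_apply, lp.coeFn_add, Pi.add_apply,
        chiInd_apply_mem (Set.mem_univ x)]
      rcases le_or_gt (v x) (((k:ℝ)-1)/N) with h | h
      · rw [chiInd_apply_mem ((hmemF k x).mpr h),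
          chiInd_apply_not_mem (fun hx => absurd ((hmemB k x).mp hx).1 (not_lt.mpr h)),
          chiInd_apply_not_mem (fun hx => absurd ((hmemE k x).mp hx)
            (not_lt.mpr (h.trans hk1)))]
        norm_num
      · rcases le_or_gt (v x) ((k:ℝ)/N) with h2 | h2
        · rw [chiInd_apply_not_mem (fun hx => absurd ((hmemF k x).mp hx) (not_le.mpr h)),
            chiInd_apply_mem ((hmemB k x).mpr ⟨h, h2⟩),
            chiInd_apply_not_mem (fun hx => absurd ((hmemE k x).mp hx) (not_lt.mpr h2))]
          norm_num
        · rw [chiInd_apply_not_mem (fun hx => absurd ((hmemF k x).mp hx)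
              (not_le.mpr (hk1.trans_lt h2))),
            chiInd_apply_not_mem (fun hx => absurd ((hmemB k x).mp hx).2 (not_le.mpr h2)),
            chiInd_apply_mem ((hmemE k x).mpr h2)]
          norm_num
    calc QF k + QB k + P k
        = mulOpL (chiInd (Fk k) + chiInd (Bk k) + chiInd (Ek k)) := by
          rw [map_add, map_add]; simp only [mulOpL_apply]; rfl
      _ = 1 := by rw [hchi, mulOpL_apply, mulOp_chiInd_univ]
  -- split each commutator
  have hsplit : ∀ k : ℕ, T * P k - P k * T
      = QF k * T * P k + QB k * T * P k - (P k * T * QF k + P k * T * QB k) := by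
    intro k
    have hQFeq : QF k = 1 - P k - QB k := by
      rw [← hone k]; abel
    rw [hQFeq]
    noncomm_ring
  -- the commutator decomposition
  have hcom : T ∘L mulOp vt - mulOp vt ∘L T
      = (N:ℂ)⁻¹ • (∑ k ∈ Finset.Icc 1 M, QF k * T * P k)
      + (N:ℂ)⁻¹ • (∑ k ∈ Finset.Icc 1 M, QB k * T * P k)
      - (N:ℂ)⁻¹ • (∑ k ∈ Finset.Icc 1 M, P k * T * QF k)
      - (N:ℂ)⁻¹ • (∑ k ∈ Finset.Icc 1 M, P k * T * QB k)
      + (T * mulOp rt - mulOp rt * T) := by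
    set S := ∑ k ∈ Finset.Icc 1 M, P k with hS
    set Rm := mulOp rt with hRm
    have h0 : T ∘L mulOp vt - mulOp vt ∘L T = T * mulOp vt - mulOp vt * T := rfl
    have e1 : T * mulOp vt - mulOp vt * T
        = (N:ℂ)⁻¹ • (T * S - S * T) + (T * Rm - Rm * T) := by
      rw [hOp]
      simp only [mul_add, add_mul, mul_smul_comm, smul_mul_assoc, smul_sub]
      abel
    have e2 : T * S - S * T
        = ∑ k ∈ Finset.Icc 1 M, (QF k * T * P k) + ∑ k ∈ Finset.Icc 1 M, (QB k * T * P k)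
          - (∑ k ∈ Finset.Icc 1 M, (P k * T * QF k)
            + ∑ k ∈ Finset.Icc 1 M, (P k * T * QB k)) := by
      calc T * S - S * T = ∑ k ∈ Finset.Icc 1 M, (T * P k - P k * T) := by
            rw [hS, Finset.mul_sum, Finset.sum_mul, Finset.sum_sub_distrib]
        _ = ∑ k ∈ Finset.Icc 1 M, (QF k * T * P k + QB k * T * P k
              - (P k * T * QF k + P k * T * QB k)) :=
            Finset.sum_congr rfl fun k _ => hsplit k
        _ = _ := by
            rw [Finset.sum_sub_distrib, Finset.sum_add_distrib, Finset.sum_add_distrib]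
    rw [h0, e1, e2]
    simp only [smul_add, smul_sub]
    abel
  rw [hcom]
  -- norm bounds
  have hiN : ‖((N:ℂ))⁻¹‖ = ((N:ℝ))⁻¹ := by
    rw [norm_inv, RCLike.norm_natCast]
  have hcard : (Finset.Icc 1 M).card = M := by
    rw [Nat.card_Icc]; omega
  have hPnorm : ∀ (k : ℕ) (ξ : lp (fun _ : X => ℂ) 2), ‖P k ξ‖ ≤ ‖ξ‖ := by
    intro k ξ
    simp only [hP]
    exact norm_mulOp_apply_le _ _ (norm_chiInd_le _)
  have hgap : ∀ k : ℕ, (k:ℝ)/N - ((k:ℝ)-1)/N = 1/N := by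
    intro k; field_simp; ring
  have hsepFE : ∀ k : ℕ, SepGT R (chiInd (Fk k)) (chiInd (Ek k)) := by
    intro k x hx y hy
    have hxF := (hmemF k x).mp (support_chiInd _ hx)
    have hyE := (hmemE k y).mp (support_chiInd _ hy)
    apply hosc
    have h1 : 1/(N:ℝ) ≤ v y - v x := by
      have := hgap k; linarith
    calc (1:ℝ)/N ≤ v y - v x := h1
      _ ≤ |v x - v y| := by rw [abs_sub_comm]; exact le_abs_self _
  have hsepEF : ∀ k : ℕ, SepGT R (chiInd (Ek k)) (chiInd (Fk k)) := by
    intro k x hx y hy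
    have hxE := (hmemE k x).mp (support_chiInd _ hx)
    have hyF := (hmemF k y).mp (support_chiInd _ hy)
    apply hosc
    have h1 : 1/(N:ℝ) ≤ v x - v y := by
      have := hgap k; linarith
    exact h1.trans (le_abs_self _)
  have hQLbound : ∀ f g : lp (fun _ : X => ℂ) ∞, SepGT R f g → ‖f‖ ≤ 1 → ‖g‖ ≤ 1 →
      ‖mulOp f ∘L T ∘L mulOp g‖ ≤ ε' := by
    intro f g hsep hf hg
    calc ‖mulOp f ∘L T ∘L mulOp g‖ ≤ ε' * ‖f‖ * ‖g‖ := hQL f g hsep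
      _ ≤ ε' * ‖f‖ := mul_le_of_le_one_right (by positivity) hg
      _ ≤ ε' := mul_le_of_le_one_right hε'.le hf
  have bndQF : ‖(N:ℂ)⁻¹ • (∑ k ∈ Finset.Icc 1 M, QF k * T * P k)‖ ≤ 2 * ε' := by
    have hterm : ∀ k : ℕ, ‖QF k * T * P k‖ ≤ ε' := by
      intro k
      have heq : QF k * T * P k = mulOp (chiInd (Fk k)) ∘L T ∘L mulOp (chiInd (Ek k)) := by
        rw [mul_assoc]
        simp only [hQF, hP]
        rfl
      rw [heq]
      exact hQLbound _ _ (hsepFE k) (norm_chiInd_le _) (norm_chiInd_le _)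
    rw [norm_smul ((N:ℂ)⁻¹) (∑ k ∈ Finset.Icc 1 M, QF k * T * P k), hiN]
    calc (N:ℝ)⁻¹ * ‖∑ k ∈ Finset.Icc 1 M, QF k * T * P k‖
        ≤ (N:ℝ)⁻¹ * ∑ k ∈ Finset.Icc 1 M, ‖QF k * T * P k‖ :=
          mul_le_mul_of_nonneg_left (norm_sum_le _ _) (by positivity)
      _ ≤ (N:ℝ)⁻¹ * ∑ _k ∈ Finset.Icc 1 M, ε' :=
          mul_le_mul_of_nonneg_left (Finset.sum_le_sum fun k _ => hterm k) (by positivity)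
      _ = (N:ℝ)⁻¹ * (M * ε') := by rw [Finset.sum_const, hcard, nsmul_eq_mul]
      _ = 2 * ε' := by rw [hM]; push_cast; field_simp
  have bndPF : ‖(N:ℂ)⁻¹ • (∑ k ∈ Finset.Icc 1 M, P k * T * QF k)‖ ≤ 2 * ε' := by
    have hterm : ∀ k : ℕ, ‖P k * T * QF k‖ ≤ ε' := by
      intro k
      have heq : P k * T * QF k = mulOp (chiInd (Ek k)) ∘L T ∘L mulOp (chiInd (Fk k)) := by
        rw [mul_assoc]
        simp only [hQF, hP]
        rfl
      rw [heq]
      exact hQLbound _ _ (hsepEF k) (norm_chiInd_le _) (norm_chiInd_le _)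
    rw [norm_smul ((N:ℂ)⁻¹) (∑ k ∈ Finset.Icc 1 M, P k * T * QF k), hiN]
    calc (N:ℝ)⁻¹ * ‖∑ k ∈ Finset.Icc 1 M, P k * T * QF k‖
        ≤ (N:ℝ)⁻¹ * ∑ k ∈ Finset.Icc 1 M, ‖P k * T * QF k‖ :=
          mul_le_mul_of_nonneg_left (norm_sum_le _ _) (by positivity)
      _ ≤ (N:ℝ)⁻¹ * ∑ _k ∈ Finset.Icc 1 M, ε' :=
          mul_le_mul_of_nonneg_left (Finset.sum_le_sum fun k _ => hterm k) (by positivity)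
      _ = (N:ℝ)⁻¹ * (M * ε') := by rw [Finset.sum_const, hcard, nsmul_eq_mul]
      _ = 2 * ε' := by rw [hM]; push_cast; field_simp
  have hdisjB : ∀ i ∈ Finset.Icc 1 M, ∀ j ∈ Finset.Icc 1 M, i ≠ j →
      ∀ x, x ∈ Bk i → x ∉ Bk j := by
    intro i _ j _ hij x hxi hxj
    obtain ⟨hi1, hi2⟩ := (hmemB i x).mp hxi
    obtain ⟨hj1, hj2⟩ := (hmemB j x).mp hxj
    rcases lt_or_gt_of_ne hij with h | h
    · have hc : (i:ℝ) ≤ (j:ℝ) - 1 := by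
        have : (i:ℝ) + 1 ≤ (j:ℝ) := by exact_mod_cast h
        linarith
      have : (i:ℝ)/N ≤ ((j:ℝ)-1)/N := by
        rw [div_le_div_iff₀ hNR hNR]; nlinarith
      linarith
    · have hc : (j:ℝ) ≤ (i:ℝ) - 1 := by
        have : (j:ℝ) + 1 ≤ (i:ℝ) := by exact_mod_cast h
        linarith
      have : (j:ℝ)/N ≤ ((i:ℝ)-1)/N := by
        rw [div_le_div_iff₀ hNR hNR]; nlinarith
      linarith
  have hMsq : (N:ℝ)⁻¹ * Real.sqrt (M:ℝ) = Real.sqrt (2/N) := by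
    have h2 : ((M : ℕ) : ℝ) = 2 * N := by rw [hM]; push_cast; ring
    rw [h2, show (2:ℝ)/N = (2*(N:ℝ))/((N:ℝ)^2) by field_simp,
      Real.sqrt_div (by positivity), Real.sqrt_sq hNR.le]
    ring
  have bndQB : ‖(N:ℂ)⁻¹ • (∑ k ∈ Finset.Icc 1 M, QB k * T * P k)‖ ≤ Real.sqrt (2/N) := by
    refine ContinuousLinearMap.opNorm_le_bound _ (Real.sqrt_nonneg _) fun ξ => ?_
    have happ : ((N:ℂ)⁻¹ • ∑ k ∈ Finset.Icc 1 M, QB k * T * P k) ξ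
        = ∑ k ∈ Finset.Icc 1 M, mulOp (chiInd (Bk k)) (((N:ℂ)⁻¹ • (T * P k)) ξ) := by
      rw [ContinuousLinearMap.smul_apply, ContinuousLinearMap.sum_apply, Finset.smul_sum]
      refine Finset.sum_congr rfl fun k _ => ?_
      calc (N:ℂ)⁻¹ • ((QB k * T * P k) ξ) = (N:ℂ)⁻¹ • (QB k ((T * P k) ξ)) := by
            rw [mul_assoc, ContinuousLinearMap.mul_apply]
        _ = mulOp (chiInd (Bk k)) ((N:ℂ)⁻¹ • ((T * P k) ξ)) := by
            simp only [hQB]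
            rw [map_smul]
        _ = mulOp (chiInd (Bk k)) (((N:ℂ)⁻¹ • (T * P k)) ξ) := by
            rw [ContinuousLinearMap.smul_apply]
    rw [happ]
    have hterm2 : ∀ k ∈ Finset.Icc 1 M,
        ‖((N:ℂ)⁻¹ • (T * P k)) ξ‖ ^ 2 ≤ ((N:ℝ)⁻¹ * ‖ξ‖)^2 := by
      intro k _
      refine pow_le_pow_left₀ (norm_nonneg _) ?_ 2
      rw [ContinuousLinearMap.smul_apply, norm_smul, hiN]
      refine mul_le_mul_of_nonneg_left ?_ (by positivity)
      rw [ContinuousLinearMap.mul_apply]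
      calc ‖T (P k ξ)‖ ≤ ‖T‖ * ‖P k ξ‖ := T.le_opNorm _
        _ ≤ 1 * ‖ξ‖ := mul_le_mul hT1 (hPnorm k ξ) (norm_nonneg _) zero_le_one
        _ = ‖ξ‖ := one_mul _
    have hsq : ‖∑ k ∈ Finset.Icc 1 M, mulOp (chiInd (Bk k)) (((N:ℂ)⁻¹ • (T * P k)) ξ)‖^2
        ≤ (Real.sqrt (2/N) * ‖ξ‖)^2 := by
      calc ‖∑ k ∈ Finset.Icc 1 M, mulOp (chiInd (Bk k)) (((N:ℂ)⁻¹ • (T * P k)) ξ)‖^2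
          ≤ ∑ k ∈ Finset.Icc 1 M, ‖((N:ℂ)⁻¹ • (T * P k)) ξ‖^2 :=
            row_est (Finset.Icc 1 M) Bk hdisjB (fun k => (N:ℂ)⁻¹ • (T * P k)) ξ
        _ ≤ ∑ _k ∈ Finset.Icc 1 M, ((N:ℝ)⁻¹*‖ξ‖)^2 := Finset.sum_le_sum hterm2
        _ = M * ((N:ℝ)⁻¹*‖ξ‖)^2 := by rw [Finset.sum_const, hcard, nsmul_eq_mul]
        _ = ((Real.sqrt (M:ℝ))^2) * ((N:ℝ)⁻¹*‖ξ‖)^2 := by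
            rw [Real.sq_sqrt (by positivity : (0:ℝ) ≤ (M:ℝ))]
        _ = (Real.sqrt (M:ℝ) * ((N:ℝ)⁻¹*‖ξ‖))^2 := (mul_pow _ _ 2).symm
        _ = (Real.sqrt (2/N) * ‖ξ‖)^2 := by
            rw [show Real.sqrt (M:ℝ) * ((N:ℝ)⁻¹*‖ξ‖)
                = ((N:ℝ)⁻¹ * Real.sqrt (M:ℝ)) * ‖ξ‖ by ring, hMsq]
    exact le_of_pow_le_pow_left₀ two_ne_zero (by positivity) hsq
  have bndPB : ‖(N:ℂ)⁻¹ • (∑ k ∈ Finset.Icc 1 M, P k * T * QB k)‖ ≤ Real.sqrt (2/N) := by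
    refine ContinuousLinearMap.opNorm_le_bound _ (Real.sqrt_nonneg _) fun ξ => ?_
    rw [ContinuousLinearMap.smul_apply, norm_smul, hiN, ContinuousLinearMap.sum_apply]
    have hterm : ∀ k ∈ Finset.Icc 1 M,
        ‖(P k * T * QB k) ξ‖ ≤ ‖mulOp (chiInd (Bk k)) ξ‖ := by
      intro k _
      have h1 : (P k * T * QB k) ξ = P k (T (mulOp (chiInd (Bk k)) ξ)) := by
        rw [ContinuousLinearMap.mul_apply, ContinuousLinearMap.mul_apply]
      rw [h1]
      calc ‖P k (T (mulOp (chiInd (Bk k)) ξ))‖ ≤ ‖T (mulOp (chiInd (Bk k)) ξ)‖ := hPnorm _ _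
        _ ≤ ‖T‖ * ‖mulOp (chiInd (Bk k)) ξ‖ := T.le_opNorm _
        _ ≤ 1 * ‖mulOp (chiInd (Bk k)) ξ‖ :=
            mul_le_mul_of_nonneg_right hT1 (norm_nonneg _)
        _ = ‖mulOp (chiInd (Bk k)) ξ‖ := one_mul _
    have hCS : ∑ k ∈ Finset.Icc 1 M, ‖mulOp (chiInd (Bk k)) ξ‖ ≤ Real.sqrt (M:ℝ) * ‖ξ‖ := by
      have h1 : (∑ k ∈ Finset.Icc 1 M, ‖mulOp (chiInd (Bk k)) ξ‖)^2
          ≤ (M:ℝ) * ∑ k ∈ Finset.Icc 1 M, ‖mulOp (chiInd (Bk k)) ξ‖^2 := by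
        have h0 := sq_sum_le_card_mul_sum_sq (s := Finset.Icc 1 M)
          (f := fun k => ‖mulOp (chiInd (Bk k)) ξ‖)
        rw [hcard] at h0
        exact_mod_cast h0
      have h2 : ∑ k ∈ Finset.Icc 1 M, ‖mulOp (chiInd (Bk k)) ξ‖^2 ≤ ‖ξ‖^2 :=
        col_est _ _ hdisjB ξ
      have h3 : (∑ k ∈ Finset.Icc 1 M, ‖mulOp (chiInd (Bk k)) ξ‖)^2
          ≤ (Real.sqrt (M:ℝ) * ‖ξ‖)^2 := by
        rw [mul_pow, Real.sq_sqrt (by positivity : (0:ℝ) ≤ (M:ℝ))]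
        calc (∑ k ∈ Finset.Icc 1 M, ‖mulOp (chiInd (Bk k)) ξ‖)^2
            ≤ (M:ℝ) * ∑ k ∈ Finset.Icc 1 M, ‖mulOp (chiInd (Bk k)) ξ‖^2 := h1
          _ ≤ (M:ℝ) * ‖ξ‖^2 := mul_le_mul_of_nonneg_left h2 (by positivity)
      exact le_of_pow_le_pow_left₀ two_ne_zero (by positivity) h3
    calc (N:ℝ)⁻¹ * ‖∑ k ∈ Finset.Icc 1 M, (P k * T * QB k) ξ‖
        ≤ (N:ℝ)⁻¹ * ∑ k ∈ Finset.Icc 1 M, ‖(P k * T * QB k) ξ‖ :=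
          mul_le_mul_of_nonneg_left (norm_sum_le _ _) (by positivity)
      _ ≤ (N:ℝ)⁻¹ * ∑ k ∈ Finset.Icc 1 M, ‖mulOp (chiInd (Bk k)) ξ‖ :=
          mul_le_mul_of_nonneg_left (Finset.sum_le_sum hterm) (by positivity)
      _ ≤ (N:ℝ)⁻¹ * (Real.sqrt (M:ℝ) * ‖ξ‖) :=
          mul_le_mul_of_nonneg_left hCS (by positivity)
      _ = Real.sqrt (2/N) * ‖ξ‖ := by rw [← hMsq]; ring
  have bndR : ‖T * mulOp rt - mulOp rt * T‖ ≤ 2/N := by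
    have hrtn : ‖mulOp rt‖ ≤ 1/N := by
      refine (norm_mulOp_le rt).trans ?_
      rw [hrt]
      exact norm_mkInf_le _ _ _ (by positivity)
    calc ‖T * mulOp rt - mulOp rt * T‖ ≤ ‖T * mulOp rt‖ + ‖mulOp rt * T‖ := norm_sub_le _ _
      _ ≤ ‖T‖ * ‖mulOp rt‖ + ‖mulOp rt‖ * ‖T‖ := add_le_add (norm_mul_le _ _) (norm_mul_le _ _)
      _ ≤ 1 * (1/N) + (1/N) * 1 := by
          have h0 := norm_nonneg T
          have h1 := norm_nonneg (mulOp rt)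
          nlinarith
      _ = 2/N := by ring
  calc ‖(N:ℂ)⁻¹ • (∑ k ∈ Finset.Icc 1 M, QF k * T * P k)
      + (N:ℂ)⁻¹ • (∑ k ∈ Finset.Icc 1 M, QB k * T * P k)
      - (N:ℂ)⁻¹ • (∑ k ∈ Finset.Icc 1 M, P k * T * QF k)
      - (N:ℂ)⁻¹ • (∑ k ∈ Finset.Icc 1 M, P k * T * QB k)
      + (T * mulOp rt - mulOp rt * T)‖
      ≤ ‖(N:ℂ)⁻¹ • (∑ k ∈ Finset.Icc 1 M, QF k * T * P k)
        + (N:ℂ)⁻¹ • (∑ k ∈ Finset.Icc 1 M, QB k * T * P k)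
        - (N:ℂ)⁻¹ • (∑ k ∈ Finset.Icc 1 M, P k * T * QF k)
        - (N:ℂ)⁻¹ • (∑ k ∈ Finset.Icc 1 M, P k * T * QB k)‖
        + ‖T * mulOp rt - mulOp rt * T‖ := norm_add_le _ _
    _ ≤ (‖(N:ℂ)⁻¹ • (∑ k ∈ Finset.Icc 1 M, QF k * T * P k)
        + (N:ℂ)⁻¹ • (∑ k ∈ Finset.Icc 1 M, QB k * T * P k)
        - (N:ℂ)⁻¹ • (∑ k ∈ Finset.Icc 1 M, P k * T * QF k)‖
        + ‖(N:ℂ)⁻¹ • (∑ k ∈ Finset.Icc 1 M, P k * T * QB k)‖)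
        + ‖T * mulOp rt - mulOp rt * T‖ := by
          gcongr
          exact norm_sub_le _ _
    _ ≤ ((‖(N:ℂ)⁻¹ • (∑ k ∈ Finset.Icc 1 M, QF k * T * P k)
        + (N:ℂ)⁻¹ • (∑ k ∈ Finset.Icc 1 M, QB k * T * P k)‖
        + ‖(N:ℂ)⁻¹ • (∑ k ∈ Finset.Icc 1 M, P k * T * QF k)‖)
        + ‖(N:ℂ)⁻¹ • (∑ k ∈ Finset.Icc 1 M, P k * T * QB k)‖)
        + ‖T * mulOp rt - mulOp rt * T‖ := by
          gcongr
          exact norm_sub_le _ _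
    _ ≤ (((‖(N:ℂ)⁻¹ • (∑ k ∈ Finset.Icc 1 M, QF k * T * P k)‖
        + ‖(N:ℂ)⁻¹ • (∑ k ∈ Finset.Icc 1 M, QB k * T * P k)‖)
        + ‖(N:ℂ)⁻¹ • (∑ k ∈ Finset.Icc 1 M, P k * T * QF k)‖)
        + ‖(N:ℂ)⁻¹ • (∑ k ∈ Finset.Icc 1 M, P k * T * QB k)‖)
        + ‖T * mulOp rt - mulOp rt * T‖ := by
          gcongr
          exact norm_add_le _ _
    _ ≤ 4 * ε' + 2 * Real.sqrt (2 / N) + 2 / N := by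
          linarith
end MainReal
set_option maxHeartbeats 1000000 in
/-- a quasi-local operator of norm at most one on a bounded geometry space
almost commutes with slowly varying bounded functions. -/
theorem quasiLocal_implies_commutant_condition [MetricSpace X]
    (hbg : ∀ r > (0 : ℝ), ∃ N : ℕ, ∀ x : X,
      (Metric.closedBall x r).Finite ∧ (Metric.closedBall x r).ncard ≤ N)
    (T : lp (fun _ : X => ℂ) 2 →L[ℂ] lp (fun _ : X => ℂ) 2)
    (hTnorm : ‖T‖ ≤ 1) (hT : QuasiLocal T) :
    ∀ ε : ℝ, 0 < ε → ε < 1 → ∃ δ > (0 : ℝ), ∃ R > (0 : ℝ),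
      ∀ h : lp (fun _ : X => ℂ) ∞, ‖h‖ = 1 →
        (∀ x y : X, dist x y ≤ R → ‖h x - h y‖ < δ) →
        ‖T ∘L mulOp h - mulOp h ∘L T‖ < ε := by
  intro ε hε0 hε1
  obtain ⟨R, hR, hQL⟩ := hT (ε/32) (by positivity)
  set N : ℕ := max 1 ⌈512/ε^2⌉₊ with hNdef
  have hN : 0 < N := le_max_left 1 _
  have hNR : (0:ℝ) < N := by exact_mod_cast hN
  have hNge : 512/ε^2 ≤ (N:ℝ) := by
    have h1 := Nat.le_ceil (512/ε^2)
    have h2' : ⌈512/ε^2⌉₊ ≤ N := le_max_right _ _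
    have h2 : (⌈512/ε^2⌉₊ : ℝ) ≤ N := Nat.cast_le.mpr h2'
    linarith
  have h512 : 512 ≤ (N:ℝ) * ε^2 := by
    rw [div_le_iff₀ (by positivity)] at hNge
    linarith
  refine ⟨1/N, by positivity, R, hR, fun h hh1 hhosc => ?_⟩
  have hhb : ∀ x, ‖h x‖ ≤ 1 := by
    intro x
    have := lp.norm_apply_le_norm (by norm_num : (∞ : ℝ≥0∞) ≠ 0) h x
    rwa [hh1] at this
  -- real and imaginary parts, shifted to be nonnegative
  set va : X → ℝ := fun x => (h x).re + 1 with hva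
  set vb : X → ℝ := fun x => (h x).im + 1 with hvb
  have hrebd : ∀ x, |(h x).re| ≤ 1 := fun x =>
    (Complex.abs_re_le_norm (h x)).trans (hhb x)
  have himbd : ∀ x, |(h x).im| ≤ 1 := fun x =>
    (Complex.abs_im_le_norm (h x)).trans (hhb x)
  have hva0 : ∀ x, 0 ≤ va x := fun x => by
    have := abs_le.mp (hrebd x); simp only [hva]; linarith [this.1]
  have hva2 : ∀ x, va x ≤ 2 := fun x => by
    have := abs_le.mp (hrebd x); simp only [hva]; linarith [this.2]
  have hvb0 : ∀ x, 0 ≤ vb x := fun x => by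
    have := abs_le.mp (himbd x); simp only [hvb]; linarith [this.1]
  have hvb2 : ∀ x, vb x ≤ 2 := fun x => by
    have := abs_le.mp (himbd x); simp only [hvb]; linarith [this.2]
  -- oscillation conditions
  have hosc_a : ∀ x y : X, 1/(N:ℝ) ≤ |va x - va y| → R < dist x y := by
    intro x y hxy
    by_contra hle
    push_neg at hle
    have h1 := hhosc x y hle
    have h2 : |va x - va y| = |(h x - h y).re| := by
      simp only [hva, Complex.sub_re]; ring_nf
    have h3 : |(h x - h y).re| ≤ ‖h x - h y‖ := by
      exact Complex.abs_re_le_norm _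
    rw [h2] at hxy
    linarith
  have hosc_b : ∀ x y : X, 1/(N:ℝ) ≤ |vb x - vb y| → R < dist x y := by
    intro x y hxy
    by_contra hle
    push_neg at hle
    have h1 := hhosc x y hle
    have h2 : |vb x - vb y| = |(h x - h y).im| := by
      simp only [hvb, Complex.sub_im]; ring_nf
    have h3 : |(h x - h y).im| ≤ ‖h x - h y‖ := by
      exact Complex.abs_im_le_norm _
    rw [h2] at hxy
    linarith
  -- package as ℓ∞ elements
  have hvab : ∀ x, ‖((va x : ℝ) : ℂ)‖ ≤ 2 := fun x => by
    rw [Complex.norm_real, Real.norm_eq_abs, abs_le]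
    exact ⟨by linarith [hva0 x], hva2 x⟩
  have hvbb : ∀ x, ‖((vb x : ℝ) : ℂ)‖ ≤ 2 := fun x => by
    rw [Complex.norm_real, Real.norm_eq_abs, abs_le]
    exact ⟨by linarith [hvb0 x], hvb2 x⟩
  set vat : lp (fun _ : X => ℂ) ∞ := mkInf (fun x => ((va x : ℝ) : ℂ)) 2 hvab with hvat
  set vbt : lp (fun _ : X => ℂ) ∞ := mkInf (fun x => ((vb x : ℝ) : ℂ)) 2 hvbb with hvbt
  have Ha := main_real T hTnorm (show (0:ℝ) < ε/32 by positivity) hQL hN hva0 hva2 hosc_a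
    vat (fun x => rfl)
  have Hb := main_real T hTnorm (show (0:ℝ) < ε/32 by positivity) hQL hN hvb0 hvb2 hosc_b
    vbt (fun x => rfl)
  -- operator identity: mulOp h = mulOp vat + I • mulOp vbt - (1+I) • 1
  have hfun : h = vat + Complex.I • vbt - ((1:ℂ) + Complex.I) • chiInd (Set.univ : Set X) := by
    apply Subtype.ext
    funext x
    rw [lp.coeFn_sub, Pi.sub_apply, lp.coeFn_add, Pi.add_apply, lp.coeFn_smul, Pi.smul_apply,
      lp.coeFn_smul, Pi.smul_apply, chiInd_apply_mem (Set.mem_univ x)]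
    show h x = ((va x : ℝ) : ℂ) + Complex.I • ((vb x : ℝ) : ℂ)
      - ((1:ℂ) + Complex.I) • (1:ℂ)
    simp only [smul_eq_mul, mul_one, hva, hvb]
    calc h x = ((h x).re : ℂ) + ((h x).im : ℂ) * Complex.I := (Complex.re_add_im (h x)).symm
      _ = _ := by push_cast; ring
  have hop : mulOp h = mulOp vat + Complex.I • mulOp vbt - ((1:ℂ) + Complex.I) • 1 := by
    rw [show mulOp h = mulOpL h from rfl, hfun, map_sub, map_add, map_smul, map_smul]
    simp only [mulOpL_apply, mulOp_chiInd_univ]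
  have hcomm : T ∘L mulOp h - mulOp h ∘L T
      = (T ∘L mulOp vat - mulOp vat ∘L T)
        + Complex.I • (T ∘L mulOp vbt - mulOp vbt ∘L T) := by
    have h0 : T ∘L mulOp h - mulOp h ∘L T = T * mulOp h - mulOp h * T := rfl
    have h1 : (T ∘L mulOp vat - mulOp vat ∘L T)
        + Complex.I • (T ∘L mulOp vbt - mulOp vbt ∘L T)
        = (T * mulOp vat - mulOp vat * T) + Complex.I • (T * mulOp vbt - mulOp vbt * T) := rfl
    rw [h0, h1, hop]
    simp only [mul_add, add_mul, mul_sub, sub_mul, mul_smul_comm, smul_mul_assoc,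
      mul_one, one_mul, smul_sub]
    abel
  -- numeric bounds
  have hsqbd : Real.sqrt (2/(N:ℝ)) ≤ ε/16 := by
    have h1 : (2:ℝ)/N ≤ ε^2/256 := by
      rw [div_le_div_iff₀ hNR (by norm_num)]
      nlinarith
    calc Real.sqrt (2/(N:ℝ)) ≤ Real.sqrt (ε^2/256) := Real.sqrt_le_sqrt h1
      _ = ε/16 := by rw [show ε^2/256 = (ε/16)^2 by ring, Real.sqrt_sq (by positivity : (0:ℝ) ≤ ε/16)]
  have h2Nbd : (2:ℝ)/N ≤ ε/256 := by
    have h1 : (2:ℝ)/N ≤ ε^2/256 := by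
      rw [div_le_div_iff₀ hNR (by norm_num)]
      nlinarith
    nlinarith
  calc ‖T ∘L mulOp h - mulOp h ∘L T‖
      = ‖(T ∘L mulOp vat - mulOp vat ∘L T)
        + Complex.I • (T ∘L mulOp vbt - mulOp vbt ∘L T)‖ := by rw [hcomm]
    _ ≤ ‖T ∘L mulOp vat - mulOp vat ∘L T‖
        + ‖Complex.I • (T ∘L mulOp vbt - mulOp vbt ∘L T)‖ := norm_add_le _ _
    _ = ‖T ∘L mulOp vat - mulOp vat ∘L T‖
        + ‖T ∘L mulOp vbt - mulOp vbt ∘L T‖ := by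
          rw [norm_smul Complex.I (T ∘L mulOp vbt - mulOp vbt ∘L T), Complex.norm_I, one_mul]
    _ ≤ (4 * (ε/32) + 2 * Real.sqrt (2/(N:ℝ)) + 2/(N:ℝ))
        + (4 * (ε/32) + 2 * Real.sqrt (2/(N:ℝ)) + 2/(N:ℝ)) := add_le_add Ha Hb
    _ < ε := by
        have hs0 := Real.sqrt_nonneg (2/(N:ℝ))
        nlinarith
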